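/- Let f : O → ℂ^n be holomorphic on an open set O ⊂ ℂ^n containing the closed ball B(ω₀, h), with |f(u) - u| ≤ υh on B(ω₀, h) where 0 < υ < 1/6. Then f is injective on B(ω₀, (1 - 4υ)h). -/

import Mathlib

open Metric

theorem stmt16 (n : ℕ) (h υ : ℝ) (hh : 0 < h) (hυ0 : 0 < υ) (hυ : υ < 1 / 6)
    (O : Set (EuclideanSpace ℂ (Fin n))) (hO : IsOpen O)
    (ω₀ : EuclideanSpace ℂ (Fin n))
    (hball : closedBall ω₀ h ⊆ O)
    (f : EuclideanSpace ℂ (Fin n) → EuclideanSpace ℂ (Fin n))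
    (hf : DifferentiableOn ℂ f O)
    (hclose : ∀ u ∈ closedBall ω₀ h, ‖f u - u‖ ≤ υ * h) :
    Set.InjOn f (closedBall ω₀ ((1 - 4 * υ) * h)) := by
  intro u hu v hv hfe
  by_contra hne
  set d := ‖v - u‖ with hd
  have hd0 : 0 < d := norm_pos_iff.mpr (sub_ne_zero.mpr (Ne.symm hne))
  have h4υ : (0:ℝ) < 1 - 4*υ := by linarith
  have hυh : (0:ℝ) < υ * h := mul_pos hυ0 hh
  have hF : ∀ p ∈ closedBall ω₀ h, ‖p - f p‖ ≤ υ*h := fun p hp => by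
    rw [← norm_neg]; simpa [neg_sub] using hclose p hp
  have hsub : closedBall ω₀ ((1-4*υ)*h) ⊆ closedBall ω₀ h :=
    closedBall_subset_closedBall (by nlinarith)
  rw [mem_closedBall, dist_eq_norm] at hu hv
  have hFu := hF u (hsub (by simpa [mem_closedBall, dist_eq_norm] using hu))
  have hFv := hF v (hsub (by simpa [mem_closedBall, dist_eq_norm] using hv))
  have hdiff : v - u = (v - f v) - (u - f u) := by rw [hfe]; abel
  have hd2 : d ≤ 2*(υ*h) := by
    calc d = ‖(v - f v) - (u - f u)‖ := by rw [hd, hdiff]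
    _ ≤ ‖v - f v‖ + ‖u - f u‖ := norm_sub_le _ _
    _ ≤ 2*(υ*h) := by linarith
  -- the complex line through u and v
  set L : ℂ → EuclideanSpace ℂ (Fin n) := fun z => u + z • (v - u) with hL
  have hLdiff : Differentiable ℂ L := (differentiable_id.smul_const (v - u)).const_add u
  set c : ℂ := 1/2 with hc
  set R₁ : ℝ := 4*(υ*h)/d with hR₁
  set R₂ : ℝ := 3*(υ*h) with hR₂
  have hR₁pos : 0 < R₁ := div_pos (by linarith) hd0
  have hmid : ‖(1/2 : ℂ) • (u + v) - ω₀‖ ≤ (1-4*υ)*h := by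
    have : (1/2 : ℂ) • (u + v) - ω₀ = (1/2 : ℂ) • ((u - ω₀) + (v - ω₀)) := by
      rw [smul_add, smul_add]
      module
    rw [this, norm_smul]
    have h12 : ‖(1/2 : ℂ)‖ = 1/2 := by norm_num
    rw [h12]
    calc (1/2 : ℝ) * ‖(u - ω₀) + (v - ω₀)‖ ≤ 1/2 * (‖u - ω₀‖ + ‖v - ω₀‖) := by
          have := norm_add_le (u - ω₀) (v - ω₀); linarith
    _ ≤ (1-4*υ)*h := by linarith
  have hLmaps : ∀ z ∈ ball c R₁, L z ∈ closedBall ω₀ h := by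
    intro z hz
    rw [mem_ball, dist_eq_norm] at hz
    have hrep : L z - ω₀ = ((1/2 : ℂ) • (u + v) - ω₀) + (z - c) • (v - u) := by
      rw [hL, hc]; module
    rw [mem_closedBall, dist_eq_norm, hrep]
    have h1 : ‖(z - c) • (v - u)‖ = ‖z - c‖ * d := by rw [norm_smul, hd]
    have h2 : ‖z - c‖ * d ≤ 4*(υ*h) := by
      have := mul_le_mul_of_nonneg_right hz.le hd0.le
      rw [hR₁, div_mul_cancel₀ _ hd0.ne'] at this
      linarith [mul_le_mul_of_nonneg_right hz.le hd0.le]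
    calc ‖((1/2 : ℂ) • (u + v) - ω₀) + (z - c) • (v - u)‖
        ≤ ‖(1/2 : ℂ) • (u + v) - ω₀‖ + ‖(z - c) • (v - u)‖ := norm_add_le _ _
    _ ≤ (1-4*υ)*h + 4*(υ*h) := by rw [h1]; linarith
    _ = h := by ring
  set φ : ℂ → EuclideanSpace ℂ (Fin n) := fun z => L z - f (L z) with hφ
  have hφdiff : DifferentiableOn ℂ φ (ball c R₁) := by
    apply DifferentiableOn.sub hLdiff.differentiableOn
    exact hf.comp hLdiff.differentiableOn (fun z hz => hball (hLmaps z hz))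
  have hφbound : ∀ z ∈ ball c R₁, ‖φ z‖ ≤ υ*h := fun z hz => hF (L z) (hLmaps z hz)
  have hcball : c ∈ ball c R₁ := mem_ball_self hR₁pos
  have hφmaps : Set.MapsTo φ (ball c R₁) (ball (φ c) R₂) := by
    intro z hz
    rw [mem_ball, dist_eq_norm]
    calc ‖φ z - φ c‖ ≤ ‖φ z‖ + ‖φ c‖ := norm_sub_le _ _
    _ ≤ υ*h + υ*h := add_le_add (hφbound z hz) (hφbound c hcball)
    _ < R₂ := by rw [hR₂]; linarith
  have hdist0 : dist (0 : ℂ) c = 1/2 := by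
    rw [hc, dist_eq_norm]; norm_num
  have hdist1 : dist (1 : ℂ) c = 1/2 := by
    rw [hc, dist_eq_norm]; norm_num
  have hhalf : (1:ℝ)/2 < R₁ := by
    rw [hR₁, lt_div_iff₀ hd0]; nlinarith
  have h0ball : (0 : ℂ) ∈ ball c R₁ := by rw [mem_ball, hdist0]; exact hhalf
  have h1ball : (1 : ℂ) ∈ ball c R₁ := by rw [mem_ball, hdist1]; exact hhalf
  have hs0 := Complex.dist_le_div_mul_dist_of_mapsTo_ball hφdiff (hφmaps.mono_right ball_subset_closedBall) h0ball
  have hs1 := Complex.dist_le_div_mul_dist_of_mapsTo_ball hφdiff (hφmaps.mono_right ball_subset_closedBall) h1ball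
  rw [hdist0] at hs0
  rw [hdist1] at hs1
  have hφ0 : φ 0 = u - f u := by simp [hφ, hL]
  have hφ1 : φ 1 = v - f v := by simp [hφ, hL]
  have hdval : d = dist (φ 1) (φ 0) := by
    rw [dist_eq_norm, hφ0, hφ1, ← hdiff, hd]
  have hratio : R₂ / R₁ = 3*d/4 := by
    rw [hR₂, hR₁]
    field_simp
  have : d ≤ 3*d/4 := by
    calc d = dist (φ 1) (φ 0) := hdval
    _ ≤ dist (φ 1) (φ c) + dist (φ c) (φ 0) := dist_triangle _ _ _
    _ ≤ R₂/R₁ * (1/2) + R₂/R₁ * (1/2) := by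
        rw [dist_comm (φ c) (φ 0)]; exact add_le_add hs1 hs0
    _ = 3*d/4 := by rw [hratio]; ring
  linarith
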